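/- arXiv:1707.08854 — 7 statements merged into one kernel-verified Lean document; each statement's English description precedes it below -/
import Mathlib

section
/- For n = 3, the two first integrals H_1 = x_1 + x_2 + x_3 and H_2 = x_1 x_2^{k_3/k_2} x_3^{k_1/k_2} have linearly independent gradients at every point of the open octant {x_1,x_2,x_3 > 0} except possibly on a set of Lebesgue measure zero; in particular, the 3-dimensional system is completely integrable. -/
open MeasureTheory

/-- For `n = 3`, the gradients of `H₁ = x₁+x₂+x₃` and `H₂ = x₁ x₂^(k₃/k₂) x₃^(k₁/k₂)`
are linearly independent at every point of the open positive octant off a set of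
Lebesgue measure zero; in particular the system is completely integrable. -/
theorem lv3_completely_integrable (k1 k2 k3 : ℝ)
    (h1 : k1 ≠ 0) (h2 : k2 ≠ 0) (h3 : k3 ≠ 0) :
    ∃ Z : Set (Fin 3 → ℝ), volume Z = 0 ∧
      ∀ x : Fin 3 → ℝ, (∀ i, 0 < x i) → x ∉ Z →
        LinearIndependent ℝ
          ![fun i : Fin 3 =>
              fderiv ℝ (fun y : Fin 3 → ℝ => y 0 + y 1 + y 2) x (Pi.single i 1),
            fun i : Fin 3 =>
              fderiv ℝ (fun y : Fin 3 → ℝ =>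
                y 0 * (y 1) ^ (k3 / k2) * (y 2) ^ (k1 / k2)) x (Pi.single i 1)] := by
  set a := k3 / k2 with ha
  set b := k1 / k2 with hb
  have ha0 : a ≠ 0 := div_ne_zero h3 h2
  have hb0 : b ≠ 0 := div_ne_zero h1 h2
  refine ⟨{x | x 1 = a * x 0 ∧ x 2 = b * x 0}, ?_, ?_⟩
  · have hsub : {x : Fin 3 → ℝ | x 1 = a * x 0 ∧ x 2 = b * x 0} ⊆
        (LinearMap.ker ((LinearMap.proj 1 : (Fin 3 → ℝ) →ₗ[ℝ] ℝ)
          - a • LinearMap.proj 0) : Set (Fin 3 → ℝ)) := by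
      intro x hx
      simp only [SetLike.mem_coe, LinearMap.mem_ker, LinearMap.sub_apply,
        LinearMap.smul_apply, LinearMap.proj_apply, smul_eq_mul, hx.1]
      ring
    refine measure_mono_null hsub ?_
    apply Measure.addHaar_submodule
    intro htop
    have hmem : (Pi.single 1 (1:ℝ) : Fin 3 → ℝ) ∈
        LinearMap.ker ((LinearMap.proj 1 : (Fin 3 → ℝ) →ₗ[ℝ] ℝ) - a • LinearMap.proj 0) := by
      rw [htop]; trivial
    simp [LinearMap.mem_ker, LinearMap.sub_apply, Pi.single_apply] at hmem
  · intro x hx hZ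
    have hx1 : (x 1 : ℝ) ≠ 0 := (hx 1).ne'
    have hx2 : (x 2 : ℝ) ≠ 0 := (hx 2).ne'
    -- derivative of H1
    have hs : HasFDerivAt (fun y : Fin 3 → ℝ => y 0 + y 1 + y 2)
        ((ContinuousLinearMap.proj 0 : (Fin 3 → ℝ) →L[ℝ] ℝ)
          + ContinuousLinearMap.proj 1 + ContinuousLinearMap.proj 2) x :=
      (((ContinuousLinearMap.proj 0 : (Fin 3 → ℝ) →L[ℝ] ℝ)).hasFDerivAt.add
        ((ContinuousLinearMap.proj 1 : (Fin 3 → ℝ) →L[ℝ] ℝ)).hasFDerivAt).add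
        ((ContinuousLinearMap.proj 2 : (Fin 3 → ℝ) →L[ℝ] ℝ)).hasFDerivAt
    -- derivative of H2
    have p0 : HasFDerivAt (fun y : Fin 3 → ℝ => y 0)
        (ContinuousLinearMap.proj 0 : (Fin 3 → ℝ) →L[ℝ] ℝ) x :=
      (ContinuousLinearMap.proj 0 : (Fin 3 → ℝ) →L[ℝ] ℝ).hasFDerivAt
    have p1 : HasFDerivAt (fun y : Fin 3 → ℝ => (y 1) ^ a)
        ((a * x 1 ^ (a - 1)) • (ContinuousLinearMap.proj 1 : (Fin 3 → ℝ) →L[ℝ] ℝ)) x :=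
      by have hc := (Real.hasDerivAt_rpow_const (p := a) (Or.inl hx1)).comp_hasFDerivAt x
          (ContinuousLinearMap.proj 1 : (Fin 3 → ℝ) →L[ℝ] ℝ).hasFDerivAt
         exact hc
    have p2 : HasFDerivAt (fun y : Fin 3 → ℝ => (y 2) ^ b)
        ((b * x 2 ^ (b - 1)) • (ContinuousLinearMap.proj 2 : (Fin 3 → ℝ) →L[ℝ] ℝ)) x :=
      by have hc := (Real.hasDerivAt_rpow_const (p := b) (Or.inl hx2)).comp_hasFDerivAt x
          (ContinuousLinearMap.proj 2 : (Fin 3 → ℝ) →L[ℝ] ℝ).hasFDerivAt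
         exact hc
    have hd : HasFDerivAt (fun y : Fin 3 → ℝ => y 0 * (y 1) ^ a * (y 2) ^ b) _ x :=
      (p0.mul p1).mul p2
    have hD := hd.fderiv
    rw [LinearIndependent.pair_iff]
    intro s t hst
    have e0 := congrFun hst 0
    have e1 := congrFun hst 1
    have e2 := congrFun hst 2
    simp only [Pi.add_apply, Pi.smul_apply, Pi.zero_apply, smul_eq_mul, hs.fderiv, hD,
      ContinuousLinearMap.add_apply, ContinuousLinearMap.smul_apply,
      ContinuousLinearMap.proj_apply, Pi.single_apply, smul_eq_mul] at e0 e1 e2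
    norm_num [Fin.ext_iff] at e0 e1 e2
    have hpa : x 1 ^ (a - 1) ≠ 0 := (Real.rpow_pos_of_pos (hx 1) _).ne'
    have hpb : x 2 ^ (b - 1) ≠ 0 := (Real.rpow_pos_of_pos (hx 2) _).ne'
    have hxa : x 1 ^ a ≠ 0 := (Real.rpow_pos_of_pos (hx 1) _).ne'
    have hxb : x 2 ^ b ≠ 0 := (Real.rpow_pos_of_pos (hx 2) _).ne'
    have h1a : x 1 ^ a = x 1 ^ (a - 1) * x 1 := by
      rw [← Real.rpow_add_one hx1 (a - 1), sub_add_cancel]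
    have h2b : x 2 ^ b = x 2 ^ (b - 1) * x 2 := by
      rw [← Real.rpow_add_one hx2 (b - 1), sub_add_cancel]
    have ht : t = 0 := by
      by_contra ht
      have hA : x 2 ^ b * x 1 ^ a = x 2 ^ b * (x 0 * (a * x 1 ^ (a - 1))) :=
        mul_left_cancel₀ ht (by linarith)
      have hB : x 2 ^ b * x 1 ^ a = x 0 * x 1 ^ a * (b * x 2 ^ (b - 1)) :=
        mul_left_cancel₀ ht (by linarith)
      have key1 : x 1 = a * x 0 := by
        have hA' := mul_left_cancel₀ hxb hA
        rw [h1a] at hA'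
        exact mul_left_cancel₀ hpa (by linear_combination hA')
      have key2 : x 2 = b * x 0 := by
        rw [h2b] at hB
        refine mul_left_cancel₀ (mul_ne_zero hpb hxa)
          (?_ : x 2 ^ (b - 1) * x 1 ^ a * x 2 = x 2 ^ (b - 1) * x 1 ^ a * (b * x 0))
        linear_combination hB
      exact hZ ⟨key1, key2⟩
    subst ht
    refine ⟨?_, rfl⟩
    linarith
end

section
/- Let n ≥ 3 be odd and k_1,…,k_n nonzero reals. Define μ_j = (k_1 k_3 ⋯ k_{j-2})/(k_2 k_4 ⋯ k_{j-1}) for odd j ≥ 3 and μ_j = (k_{j+1} k_{j+3} ⋯ k_n)/(k_j k_{j+2} ⋯ k_{n-1}) for even j ≥ 2. Then H_2(x) = x_1 Π_{j=2}^n x_j^{μ_j} is a first integral of the Lotka-Volterra system ẋ_i = x_i(k_i x_{i+1} - k_{i-1} x_{i-1}) on the open positive orthant. -/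
open Finset

lemma dH (n : ℕ) [NeZero n] (μ : Fin n → ℝ) (x : Fin n → ℝ) (hx : ∀ i, 0 < x i) (i : Fin n) :
    fderiv ℝ (fun y : Fin n → ℝ => y 0 * ∏ j ∈ Finset.univ.erase 0, (y j) ^ (μ j)) x
      (Pi.single i 1)
    = (if i = 0 then 1 else μ i) / x i *
        (x 0 * ∏ j ∈ Finset.univ.erase 0, (x j) ^ (μ j)) := by
  have h0 : HasFDerivAt (fun y : Fin n → ℝ => y 0)
      (ContinuousLinearMap.proj 0 : (Fin n → ℝ) →L[ℝ] ℝ) x :=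
    hasFDerivAt_apply 0 x
  have hj : ∀ j ∈ Finset.univ.erase (0 : Fin n),
      HasFDerivAt (fun y : Fin n → ℝ => (y j) ^ (μ j))
        ((μ j * x j ^ (μ j - 1)) • (ContinuousLinearMap.proj j : (Fin n → ℝ) →L[ℝ] ℝ)) x := by
    intro j _
    exact (Real.hasDerivAt_rpow_const (Or.inl (hx j).ne')).comp_hasFDerivAt (f := fun y : Fin n → ℝ => y j) x
      (hasFDerivAt_apply (f := x) j)
  have H := (h0.mul (HasFDerivAt.finset_prod hj)).fderiv
  rw [show (fun y : Fin n → ℝ => y 0 * ∏ j ∈ Finset.univ.erase 0, (y j) ^ (μ j))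
      = ((fun y : Fin n → ℝ => y 0) * fun y => ∏ j ∈ Finset.univ.erase 0, (y j) ^ (μ j)) from rfl, H]
  simp only [ContinuousLinearMap.add_apply, ContinuousLinearMap.smul_apply,
    ContinuousLinearMap.coe_sum', Finset.sum_apply, ContinuousLinearMap.proj_apply,
    Pi.single_apply, smul_eq_mul]
  rcases eq_or_ne i 0 with h | h
  · subst h
    rw [Finset.sum_eq_zero, if_pos rfl]
    · rw [if_pos rfl]
      rw [mul_zero, zero_add, mul_one, one_div, inv_mul_cancel_left₀ (hx 0).ne']
    · intro j hj
      rw [if_neg (Finset.ne_of_mem_erase hj), mul_zero, mul_zero]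
  · rw [Finset.sum_eq_single i]
    · rw [if_pos rfl, if_neg (fun e => h e.symm), if_neg h]
      have hP : ∏ j ∈ Finset.univ.erase 0, (x j) ^ (μ j)
          = (x i) ^ (μ i) * ∏ l ∈ (Finset.univ.erase 0).erase i, (x l) ^ (μ l) :=
          (Finset.mul_prod_erase _ _ (Finset.mem_erase.2 ⟨h, Finset.mem_univ i⟩)).symm
      rw [hP, Real.rpow_sub_one (hx i).ne']
      field_simp
      ring
    · intro j hjm hji
      rw [if_neg hji, mul_zero, mul_zero]
    · intro habs
      exact absurd (Finset.mem_erase.2 ⟨h, Finset.mem_univ i⟩) habs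


open Fin.CommRing in
lemma lv_key (n : ℕ) [NeZero n] (hn : 3 ≤ n) (hodd : Odd n)
    (k : Fin n → ℝ) (hk : ∀ i, k i ≠ 0)
    (μ : Fin n → ℝ)
    (hμeven : ∀ i : Fin n, 2 ≤ (i : ℕ) → (i : ℕ) % 2 = 0 →
      μ i = ∏ t ∈ Finset.range ((i : ℕ) / 2),
        k ((2 * t : ℕ) : Fin n) / k ((2 * t + 1 : ℕ) : Fin n))
    (hμodd : ∀ i : Fin n, (i : ℕ) % 2 = 1 →
      μ i = ∏ t ∈ Finset.range ((n - (i : ℕ)) / 2),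
        k (((i : ℕ) + 1 + 2 * t : ℕ) : Fin n) / k (((i : ℕ) + 2 * t : ℕ) : Fin n))
    (j : Fin n) :
    k j * (if j = 0 then 1 else μ j) = k (j + 1) * (if j + 2 = 0 then 1 else μ (j + 2)) := by
  obtain ⟨a, ha, hj⟩ : ∃ a : ℕ, a < n ∧ j = ((a : ℕ) : Fin n) :=
    ⟨j.val, j.isLt, (Fin.cast_val_eq_self j).symm⟩
  have hval : ∀ b : ℕ, b < n → (((b : ℕ) : Fin n) : ℕ) = b := fun b hb => Fin.val_cast_of_lt hb
  have hcast1 : j + 1 = ((a + 1 : ℕ) : Fin n) := by rw [hj]; push_cast; ring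
  have hcast2 : j + 2 = ((a + 2 : ℕ) : Fin n) := by rw [hj]; push_cast; ring
  obtain ⟨c, hnc⟩ := hodd
  rcases Nat.even_or_odd a with he | ho
  · -- a even
    obtain ⟨e, hae⟩ := he
    have hane : a ≠ n - 2 ∧ a ≠ n := by omega
    by_cases hend : a = n - 1
    · -- wrap: j = n-1, j+2 = 1
      subst hend
      have h2 : j + 2 = ((1 : ℕ) : Fin n) := by
        rw [hcast2]
        have : (n - 1 + 2 : ℕ) = n + 1 := by omega
        rw [this]; push_cast; rw [Fin.natCast_self]; ring
      have h2v : ((j + 2 : Fin n) : ℕ) = 1 := by rw [h2, hval 1 (by omega)]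
      have h2ne : j + 2 ≠ 0 := by
        intro h; rw [h] at h2v; simp at h2v
      have hjne : j ≠ 0 := by
        intro h; rw [h] at hj
        have := hval (n-1) (by omega); rw [← hj] at this; simp at this; omega
      rw [if_neg hjne, if_neg h2ne]
      have hjv : (j : ℕ) = n - 1 := by rw [hj, hval _ (by omega)]
      rw [hμeven j (by omega) (by omega), hμodd (j+2) (by rw [h2v])]
      rw [hjv, h2v]
      set m := (n - 1) / 2 with hm
      have hnm : n - 1 = 2 * m := by omega
      rw [Finset.prod_div_distrib, Finset.prod_div_distrib]
      have hB : (∏ t ∈ range m, k ((2 * t + 1 : ℕ) : Fin n))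
          = ∏ t ∈ range m, k ((1 + 2 * t : ℕ) : Fin n) := by
        exact Finset.prod_congr rfl fun t _ =>
          congrArg (fun b : ℕ => k ((b : ℕ) : Fin n)) (by omega)
      have hA : k j * ∏ t ∈ range m, k ((2 * t : ℕ) : Fin n)
          = k ((0 : ℕ) : Fin n) * ∏ t ∈ range m, k ((1 + 1 + 2 * t : ℕ) : Fin n) := by
        have h1 : ∏ t ∈ range (m + 1), k ((2 * t : ℕ) : Fin n)
            = (∏ t ∈ range m, k ((2 * t : ℕ) : Fin n)) * k j := by
          rw [Finset.prod_range_succ, show (2*m : ℕ) = n - 1 by omega, ← hj]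
        have h2' : ∏ t ∈ range (m + 1), k ((2 * t : ℕ) : Fin n)
            = (∏ t ∈ range m, k ((1 + 1 + 2 * t : ℕ) : Fin n)) * k ((0 : ℕ) : Fin n) := by
          rw [Finset.prod_range_succ']
          congr 1
          refine Finset.prod_congr rfl fun t _ =>
            congrArg (fun b : ℕ => k ((b : ℕ) : Fin n)) (by omega)
        linear_combination h2' - h1
      rw [hB]
      have hj1 : j + 1 = ((0 : ℕ) : Fin n) := by
        rw [hcast1]
        have hnn : (n - 1 + 1 : ℕ) = n := by omega
        rw [hnn, Fin.natCast_self, Nat.cast_zero]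
      rw [hj1]
      rw [mul_div_assoc', mul_div_assoc', hA]
    · -- no wrap: a even, a + 2 < n
      have ha2 : a + 2 < n := by rcases hane with ⟨h1, h2⟩; omega
      have h2v : ((j + 2 : Fin n) : ℕ) = a + 2 := by rw [hcast2, hval _ ha2]
      have h2ne : j + 2 ≠ 0 := by intro h; rw [h] at h2v; simp at h2v
      rw [if_neg h2ne]
      have hνj : (if j = 0 then 1 else μ j)
          = ∏ t ∈ range (a / 2), k ((2 * t : ℕ) : Fin n) / k ((2 * t + 1 : ℕ) : Fin n) := by
        rcases Nat.eq_zero_or_pos a with h0 | hpos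
        · subst h0
          rw [if_pos (by rw [hj]; simp), Finset.range_zero, Finset.prod_empty]
        · have hjne : j ≠ 0 := by
            intro h; rw [h] at hj
            have := hval a ha; rw [← hj] at this; simp at this; omega
          rw [if_neg hjne, hμeven j (by rw [hj, hval a ha]; omega)
            (by rw [hj, hval a ha]; omega), hj, hval a ha]
      rw [hνj, hμeven (j+2) (by omega) (by omega), h2v]
      have hdiv : (a + 2) / 2 = a / 2 + 1 := by omega
      rw [hdiv, Finset.prod_range_succ]
      have h2a : (2 * (a / 2) : ℕ) = a := by omega
      rw [h2a, ← hj]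
      rw [hcast1.symm]
      rw [mul_comm (k (j + 1)), mul_assoc, div_mul_cancel₀ _ (hk (j + 1)), mul_comm]
  · -- a odd
    obtain ⟨d, had⟩ := ho
    have han2 : a ≤ n - 2 := by omega
    have hjne : j ≠ 0 := by
      intro h; rw [h] at hj
      have := hval a ha; rw [← hj] at this; simp at this; omega
    have hjv : (j : ℕ) = a := by rw [hj, hval a ha]
    rw [if_neg hjne, hμodd j (by omega)]
    by_cases hend : a = n - 2
    · -- j + 2 = 0
      subst hend
      have h2 : j + 2 = 0 := by
        rw [hcast2]
        have : (n - 2 + 2 : ℕ) = n := by omega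
        rw [this, Fin.natCast_self]
      rw [if_pos h2]
      have hm : (n - (j : ℕ)) / 2 = 1 := by omega
      rw [hm, Finset.prod_range_one]
      have e1 : (((j : ℕ) + 1 + 2 * 0 : ℕ) : Fin n) = j + 1 := by
        rw [show ((j : ℕ) + 1 + 2 * 0 : ℕ) = n - 2 + 1 by omega, ← hcast1]
      have e2 : (((j : ℕ) + 2 * 0 : ℕ) : Fin n) = j := by
        rw [show ((j : ℕ) + 2 * 0 : ℕ) = n - 2 by omega, ← hj]
      rw [e1, e2]
      rw [mul_one, ← mul_div_assoc, mul_div_cancel_left₀ _ (hk j)]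
    · -- a + 2 ≤ n - 2, both odd formula
      have ha4 : a + 2 < n := by omega
      have h2v : ((j + 2 : Fin n) : ℕ) = a + 2 := by rw [hcast2, hval _ ha4]
      have h2ne : j + 2 ≠ 0 := by intro h; rw [h] at h2v; simp at h2v
      rw [if_neg h2ne, hμodd (j+2) (by omega), h2v, hjv]
      set m := (n - a) / 2 with hmdef
      have hm2 : 2 ≤ m := by omega
      have hm' : (n - (a + 2)) / 2 = m - 1 := by omega
      rw [hm']
      rw [Finset.prod_div_distrib, Finset.prod_div_distrib]
      have hmm : m = (m - 1) + 1 := by omega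
      have hN : ∏ t ∈ range m, k ((a + 1 + 2 * t : ℕ) : Fin n)
          = (∏ t ∈ range (m-1), k ((a + 2 + 1 + 2 * t : ℕ) : Fin n)) * k (j + 1) := by
        rw [hmm, Finset.prod_range_succ']
        congr 1
        · refine Finset.prod_congr rfl fun t _ =>
            congrArg (fun b : ℕ => k ((b : ℕ) : Fin n)) (by omega)
        · rw [hcast1]
      have hD : ∏ t ∈ range m, k ((a + 2 * t : ℕ) : Fin n)
          = (∏ t ∈ range (m-1), k ((a + 2 + 2 * t : ℕ) : Fin n)) * k j := by
        rw [hmm, Finset.prod_range_succ']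
        congr 1
        · refine Finset.prod_congr rfl fun t _ =>
            congrArg (fun b : ℕ => k ((b : ℕ) : Fin n)) (by omega)
        · rw [hj]
          exact congrArg (fun b : ℕ => k ((b : ℕ) : Fin n)) (by omega)
      rw [hN, hD]
      have hD'ne : (∏ t ∈ range (m-1), k ((a + 2 + 2 * t : ℕ) : Fin n)) ≠ 0 :=
        Finset.prod_ne_zero_iff.2 fun t _ => hk _
      have key : ∀ p q r s : ℝ, p ≠ 0 → s ≠ 0 → p * ((q * r) / (s * p)) = r * (q / s) := by
        intros p q r s hp hs; field_simp
      exact key _ _ _ _ (hk j) hD'ne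



/-- For odd `n ≥ 3`, `H₂ = x₁ ∏_{j=2}^n x_j^{μ_j}` is a first integral of the
Lotka-Volterra system on the open positive orthant.  Indices here are 0-based:
coordinate `i : Fin n` corresponds to `x_{i+1}`, so the 1-based exponents
`μ_j = k₁k₃⋯k_{j-2}/(k₂k₄⋯k_{j-1})` (odd `j ≥ 3`) and
`μ_j = k_{j+1}k_{j+3}⋯k_n/(k_j k_{j+2}⋯k_{n-1})` (even `j ≥ 2`) become the
products below over even/odd 0-based indices. -/
theorem lv_odd_H2_first_integral (n : ℕ) [NeZero n] (hn : 3 ≤ n) (hodd : Odd n)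
    (k : Fin n → ℝ) (hk : ∀ i, k i ≠ 0)
    (μ : Fin n → ℝ)
    (hμeven : ∀ i : Fin n, 2 ≤ (i : ℕ) → (i : ℕ) % 2 = 0 →
      μ i = ∏ t ∈ Finset.range ((i : ℕ) / 2),
        k (Fin.ofNat n (2 * t)) / k (Fin.ofNat n (2 * t + 1)))
    (hμodd : ∀ i : Fin n, (i : ℕ) % 2 = 1 →
      μ i = ∏ t ∈ Finset.range ((n - (i : ℕ)) / 2),
        k (Fin.ofNat n ((i : ℕ) + 1 + 2 * t)) / k (Fin.ofNat n ((i : ℕ) + 2 * t)))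
    (x : Fin n → ℝ) (hx : ∀ i, 0 < x i) :
    ∑ i : Fin n, x i * (k i * x (i + 1) - k (i - 1) * x (i - 1)) *
        fderiv ℝ
          (fun y : Fin n → ℝ => y 0 * ∏ j ∈ Finset.univ.erase 0, (y j) ^ (μ j)) x
          (Pi.single i 1) = 0 := by
  have hkey := lv_key n hn hodd k hk μ hμeven hμodd
  set ν : Fin n → ℝ := fun i => if i = 0 then 1 else μ i with hνdef
  set P : ℝ := x 0 * ∏ j ∈ Finset.univ.erase 0, (x j) ^ (μ j) with hP
  have gen : ∀ a E b Q : ℝ, a ≠ 0 → a * E * (b / a * Q) = Q * (b * E) := by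
    intros a E b Q ha; field_simp
  have hsum : ∑ i : Fin n, ν i * (k i * x (i + 1) - k (i - 1) * x (i - 1)) = 0 := by
    have h1 : ∑ i : Fin n, ν i * (k i * x (i + 1))
        = ∑ i : Fin n, ν (i - 1) * (k (i - 1) * x i) := by
      refine Fintype.sum_equiv (Equiv.addRight 1) _ _ fun i => ?_
      have : (i + 1 : Fin n) - 1 = i := add_sub_cancel_right i 1
      simp only [Equiv.coe_addRight, this]
    have h2 : ∑ i : Fin n, ν i * (k (i - 1) * x (i - 1))
        = ∑ i : Fin n, ν (i + 1) * (k i * x i) := by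
      refine Fintype.sum_equiv (Equiv.subRight 1) _ _ fun i => ?_
      have : (i - 1 : Fin n) + 1 = i := sub_add_cancel i 1
      simp only [Equiv.subRight_apply, this]
    have h3 : ∀ i : Fin n, ν (i - 1) * (k (i - 1) * x i) - ν (i + 1) * (k i * x i) = 0 := by
      intro i
      have hh := hkey (i - 1)
      have e1 : (i - 1 : Fin n) + 1 = i := sub_add_cancel i 1
      have e2 : (i - 1 : Fin n) + 2 = i + 1 := by
        open Fin.CommRing in ring
      rw [e1, e2] at hh
      have hh' : k (i - 1) * ν (i - 1) = k i * ν (i + 1) := hh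
      linear_combination x i * hh'
    calc ∑ i : Fin n, ν i * (k i * x (i + 1) - k (i - 1) * x (i - 1))
        = (∑ i : Fin n, ν i * (k i * x (i + 1)))
          - ∑ i : Fin n, ν i * (k (i - 1) * x (i - 1)) := by
          rw [← Finset.sum_sub_distrib]
          exact Finset.sum_congr rfl fun i _ => by ring
      _ = ∑ i : Fin n, (ν (i - 1) * (k (i - 1) * x i) - ν (i + 1) * (k i * x i)) := by
          rw [h1, h2, ← Finset.sum_sub_distrib]
      _ = 0 := Finset.sum_eq_zero fun i _ => h3 i
  calc ∑ i : Fin n, x i * (k i * x (i + 1) - k (i - 1) * x (i - 1)) *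
        fderiv ℝ
          (fun y : Fin n → ℝ => y 0 * ∏ j ∈ Finset.univ.erase 0, (y j) ^ (μ j)) x
          (Pi.single i 1)
      = ∑ i : Fin n, P * (ν i * (k i * x (i + 1) - k (i - 1) * x (i - 1))) := by
        refine Finset.sum_congr rfl fun i _ => ?_
        rw [dH n μ x hx i]
        exact gen _ _ _ _ (hx i).ne'
    _ = P * ∑ i : Fin n, ν i * (k i * x (i + 1) - k (i - 1) * x (i - 1)) :=
        (Finset.mul_sum _ _ _).symm
    _ = 0 := by rw [hsum, mul_zero]
end

section
/- Let n ≥ 3 be odd and k_1,…,k_n nonzero reals. Set λ_1 = 1, λ_j = (k_1 k_3 ⋯ k_{j-2})/(k_2 k_4 ⋯ k_{j-1}) for odd j ≥ 3, and λ_j = (k_{j+1} k_{j+3} ⋯ k_n)/(k_j k_{j+2} ⋯ k_{n-1}) for even j ≥ 2. Then these λ_j solve the cyclic linear system k_{j-1} λ_{j-1} - k_j λ_{j+1} = 0 for all j (indices mod n), i.e., Σ_{i=1}^n λ_i K_i = 0 where K_i(x) = k_i x_{i+1} - k_{i-1} x_{i-1}. -/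
private lemma lv_aux (n : ℕ) (hn : 3 ≤ n) (hodd : Odd n)
    (f : ℕ → ℝ) (hf : ∀ a, f a ≠ 0)
    (g : ℕ → ℝ) (hg0 : g 0 = 1)
    (hgeven : ∀ m, m < n → m % 2 = 0 →
      g m = ∏ t ∈ Finset.range (m / 2), f (2 * t) / f (2 * t + 1))
    (hgodd : ∀ m, m < n → m % 2 = 1 →
      g m = ∏ t ∈ Finset.range ((n - m) / 2), f (m + 1 + 2 * t) / f (m + 2 * t))
    (m : ℕ) (hm : m < n) :
    f (if m = 0 then n - 1 else m - 1) * g (if m = 0 then n - 1 else m - 1)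
      = f m * g (if m = n - 1 then 0 else m + 1) := by
  obtain ⟨c, hc⟩ := hodd
  rcases eq_or_ne m 0 with rfl | hm0
  · rw [if_pos rfl, if_neg (by omega)]
    rw [hgeven (n - 1) (by omega) (by omega), hgodd 1 (by omega) (by omega)]
    rw [show (n - 1) / 2 = c from by omega]
    have hnum : f (n - 1) * ∏ t ∈ Finset.range c, f (2 * t)
        = f 0 * ∏ t ∈ Finset.range c, f (1 + 1 + 2 * t) := by
      have e1 := Finset.prod_range_succ (fun t => f (2 * t)) c
      have e2 := Finset.prod_range_succ' (fun t => f (2 * t)) c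
      have e3 : ∏ t ∈ Finset.range c, f (2 * (t + 1))
          = ∏ t ∈ Finset.range c, f (1 + 1 + 2 * t) := by
        apply Finset.prod_congr rfl
        intro t _
        rw [show 2 * (t + 1) = 1 + 1 + 2 * t from by omega]
      rw [e1, show 2 * c = n - 1 from by omega] at e2
      rw [mul_comm, e2, e3, mul_comm, show (2 : ℕ) * 0 = 0 from rfl]
    have hden : ∏ t ∈ Finset.range c, f (2 * t + 1)
        = ∏ t ∈ Finset.range c, f (1 + 2 * t) := by
      apply Finset.prod_congr rfl
      intro t _
      rw [show 2 * t + 1 = 1 + 2 * t from by omega]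
    rw [Finset.prod_div_distrib, Finset.prod_div_distrib, hden,
      mul_div_assoc', mul_div_assoc', hnum]
  rcases eq_or_ne m (n - 1) with rfl | hml
  · rw [if_neg hm0, if_pos rfl, hg0]
    rw [hgodd (n - 1 - 1) (by omega) (by omega)]
    rw [show (n - (n - 1 - 1)) / 2 = 1 from by omega, Finset.prod_range_one]
    rw [show n - 1 - 1 + 1 + 2 * 0 = n - 1 from by omega,
      show n - 1 - 1 + 2 * 0 = n - 1 - 1 from by omega]
    rw [mul_div_cancel₀ _ (hf _), mul_one]
  rcases Nat.even_or_odd m with hme | hmo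
  · -- m even, 1 ≤ m, m ≠ n-1 : use odd formula on both sides
    have hme2 : m % 2 = 0 := Nat.even_iff.mp hme
    rw [if_neg hm0, if_neg hml]
    rw [hgodd (m - 1) (by omega) (by omega), hgodd (m + 1) (by omega) (by omega)]
    rw [show (n - (m - 1)) / 2 = (n - (m + 1)) / 2 + 1 from by omega]
    rw [Finset.prod_range_succ']
    have e3 : ∏ t ∈ Finset.range ((n - (m + 1)) / 2), f (m - 1 + 1 + 2 * (t + 1)) / f (m - 1 + 2 * (t + 1))
        = ∏ t ∈ Finset.range ((n - (m + 1)) / 2), f (m + 1 + 1 + 2 * t) / f (m + 1 + 2 * t) := by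
      apply Finset.prod_congr rfl
      intro t _
      rw [show m - 1 + 1 + 2 * (t + 1) = m + 1 + 1 + 2 * t from by omega,
        show m - 1 + 2 * (t + 1) = m + 1 + 2 * t from by omega]
    rw [e3, show m - 1 + 1 + 2 * 0 = m from by omega, show m - 1 + 2 * 0 = m - 1 from by omega]
    have habc : ∀ a b P : ℝ, a ≠ 0 → a * (P * (b / a)) = b * P := by
      intro a b P ha
      field_simp
    exact habc _ _ _ (hf _)
  · -- m odd : use even formula on both sides
    have hmo2 : m % 2 = 1 := Nat.odd_iff.mp hmo
    rw [if_neg hm0, if_neg hml]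
    rw [hgeven (m - 1) (by omega) (by omega), hgeven (m + 1) (by omega) (by omega)]
    rw [show (m + 1) / 2 = (m - 1) / 2 + 1 from by omega, Finset.prod_range_succ]
    rw [show 2 * ((m - 1) / 2) = m - 1 from by omega]
    rw [show m - 1 + 1 = m from by omega]
    have habc : ∀ a b P : ℝ, a ≠ 0 → a * (P * (b / a)) = b * P := by
      intro a b P ha
      field_simp
    exact (habc _ _ _ (hf m)).symm

open Fin.NatCast in
/-- For odd `n ≥ 3`, the exponents `λ` (with `λ₁ = 1`, written 0-based below) solve
the cyclic linear system `k_{j-1} λ_{j-1} - k_j λ_{j+1} = 0` for all `j`, i.e.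
`∑ i, λ i * K i = 0` where `K i x = k i * x (i+1) - k (i-1) * x (i-1)`. -/
theorem lv_odd_lambda_solves (n : ℕ) [NeZero n] (hn : 3 ≤ n) (hodd : Odd n)
    (k : Fin n → ℝ) (hk : ∀ i, k i ≠ 0)
    (lam : Fin n → ℝ) (hlam1 : lam 0 = 1)
    (hlameven : ∀ i : Fin n, 2 ≤ (i : ℕ) → (i : ℕ) % 2 = 0 →
      lam i = ∏ t ∈ Finset.range ((i : ℕ) / 2),
        k ((2 * t : ℕ) : Fin n) / k ((2 * t + 1 : ℕ) : Fin n))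
    (hlamodd : ∀ i : Fin n, (i : ℕ) % 2 = 1 →
      lam i = ∏ t ∈ Finset.range ((n - (i : ℕ)) / 2),
        k (((i : ℕ) + 1 + 2 * t : ℕ) : Fin n) / k (((i : ℕ) + 2 * t : ℕ) : Fin n)) :
    (∀ j : Fin n, k (j - 1) * lam (j - 1) - k j * lam (j + 1) = 0) ∧
    (∀ x : Fin n → ℝ,
      ∑ i : Fin n, lam i * (k i * x (i + 1) - k (i - 1) * x (i - 1)) = 0) := by
  have hval : ∀ m : ℕ, m < n → ((m : Fin n) : ℕ) = m := fun m h => Fin.val_cast_of_lt h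
  have hpred : ∀ j : Fin n, j.val ≠ 0 → j - 1 = ((j.val - 1 : ℕ) : Fin n) := by
    intro j h
    have h1 : ((j.val - 1 : ℕ) : Fin n) + 1 = j := by
      rw [← Nat.cast_one (R := Fin n), ← Nat.cast_add,
        Nat.sub_add_cancel (Nat.one_le_iff_ne_zero.mpr h), Fin.cast_val_eq_self]
    exact (eq_sub_of_add_eq h1).symm
  have hpred0 : (0 : Fin n) - 1 = ((n - 1 : ℕ) : Fin n) := by
    have h1 : ((n - 1 : ℕ) : Fin n) + 1 = 0 := by
      rw [← Nat.cast_one (R := Fin n), ← Nat.cast_add, Nat.sub_add_cancel (by omega)]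
      simp
    exact (eq_sub_of_add_eq h1).symm
  have hsucc : ∀ j : Fin n, j + 1 = ((j.val + 1 : ℕ) : Fin n) := by
    intro j
    rw [Nat.cast_add, Nat.cast_one, Fin.cast_val_eq_self]
  have hgeven : ∀ m : ℕ, m < n → m % 2 = 0 →
      lam ((m : ℕ) : Fin n) = ∏ t ∈ Finset.range (m / 2),
        k ((2 * t : ℕ) : Fin n) / k ((2 * t + 1 : ℕ) : Fin n) := by
    intro m hm hm2
    rcases eq_or_ne m 0 with rfl | h0
    · simpa using hlam1
    · have h := hlameven ((m : ℕ) : Fin n) (by rw [hval m hm]; omega) (by rw [hval m hm]; omega)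
      rwa [hval m hm] at h
  have hgodd : ∀ m : ℕ, m < n → m % 2 = 1 →
      lam ((m : ℕ) : Fin n) = ∏ t ∈ Finset.range ((n - m) / 2),
        k ((m + 1 + 2 * t : ℕ) : Fin n) / k ((m + 2 * t : ℕ) : Fin n) := by
    intro m hm hm2
    have h := hlamodd ((m : ℕ) : Fin n) (by rw [hval m hm]; omega)
    rwa [hval m hm] at h
  have key : ∀ j : Fin n, k (j - 1) * lam (j - 1) = k j * lam (j + 1) := by
    intro j
    have hm : (j : ℕ) < n := j.isLt
    have aux := lv_aux n hn hodd (fun a => k ((a : ℕ) : Fin n)) (fun a => hk _)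
      (fun a => lam ((a : ℕ) : Fin n)) (by simpa using hlam1) hgeven hgodd j.val hm
    rcases eq_or_ne (j : ℕ) 0 with h0 | h0
    · have hj0 : j = 0 := Fin.ext (by simpa using h0)
      rw [if_pos h0, if_neg (by omega)] at aux
      rw [hj0, hpred0, zero_add]
      simpa [hj0] using aux
    rcases eq_or_ne (j : ℕ) (n - 1) with hlast | hlast
    · have hj1 : j + 1 = 0 := by
        rw [hsucc j, hlast, show n - 1 + 1 = n from by omega]
        simp
      rw [if_neg h0, if_pos hlast] at aux
      rw [Fin.cast_val_eq_self] at aux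
      rw [hpred j h0, hj1]
      simpa using aux
    · rw [if_neg h0, if_neg hlast] at aux
      rw [Fin.cast_val_eq_self] at aux
      rw [hpred j h0, hsucc j]
      exact aux
  refine ⟨fun j => sub_eq_zero.mpr (key j), fun x => ?_⟩
  have key2 : ∀ i : Fin n, k i * lam i = k (i + 1) * lam (i + 2) := by
    intro i
    have h := key (i + 1)
    rw [add_sub_cancel_right, show (i : Fin n) + 1 + 1 = i + 2 from by open Fin.CommRing in ring] at h
    exact h
  have h1 : ∑ i : Fin n, lam i * (k i * x (i + 1) - k (i - 1) * x (i - 1))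
      = (∑ i : Fin n, (k i * lam i) * x (i + 1))
        - ∑ i : Fin n, (k (i - 1) * lam i) * x (i - 1) := by
    rw [← Finset.sum_sub_distrib]
    apply Finset.sum_congr rfl
    intro i _
    ring
  have h2 : ∑ i : Fin n, (k (i + 1) * lam (i + 2)) * x (i + 1)
      = ∑ i : Fin n, (k (i - 1) * lam i) * x (i - 1) := by
    apply Fintype.sum_equiv (Equiv.addRight (2 : Fin n))
    intro i
    simp only [Equiv.coe_addRight]
    rw [show (i + 2 - 1 : Fin n) = i + 1 from by open Fin.CommRing in ring]
  rw [h1, ← h2, ← Finset.sum_sub_distrib]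
  apply Finset.sum_eq_zero
  intro i _
  rw [← sub_mul, sub_eq_zero.mpr (key2 i), zero_mul]
end

section
/- Let n ≥ 4 be even and suppose k_1 k_3 ⋯ k_{n-1} = k_2 k_4 ⋯ k_n with all k_i nonzero. Define μ_j = (k_{j+1} k_{j+3} ⋯ k_n)/(k_j k_{j+2} ⋯ k_{n-1}) for odd j ≥ 3. Then H_2(x) = x_1 x_3^{μ_3} x_5^{μ_5} ⋯ x_{n-1}^{μ_{n-1}} is a first integral of the system ẋ_i = x_i(k_i x_{i+1} - k_{i-1} x_{i-1}) on the open positive orthant. -/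
open Fin.NatCast in
/-- For even `n ≥ 4` with `k₁k₃⋯k_{n-1} = k₂k₄⋯k_n`, the function
`H₂ = x₁ x₃^{μ₃} ⋯ x_{n-1}^{μ_{n-1}}` (odd 1-based indices, i.e. even 0-based
indices) is a first integral on the open positive orthant, where
`μ_j = k_{j+1}k_{j+3}⋯k_n/(k_j k_{j+2}⋯k_{n-1})` for odd `j ≥ 3`. -/
theorem lv_even_H2_first_integral (n : ℕ) [NeZero n] (hn : 4 ≤ n) (heven : Even n)
    (k : Fin n → ℝ) (hk : ∀ i, k i ≠ 0)
    (hprod : ∏ t ∈ Finset.range (n / 2), k ((2 * t : ℕ) : Fin n)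
           = ∏ t ∈ Finset.range (n / 2), k ((2 * t + 1 : ℕ) : Fin n))
    (μ : Fin n → ℝ)
    (hμ : ∀ i : Fin n, 2 ≤ (i : ℕ) → (i : ℕ) % 2 = 0 →
      μ i = ∏ t ∈ Finset.range ((n - (i : ℕ)) / 2),
        k (((i : ℕ) + 1 + 2 * t : ℕ) : Fin n) / k (((i : ℕ) + 2 * t : ℕ) : Fin n))
    (x : Fin n → ℝ) (hx : ∀ i, 0 < x i) :
    ∑ i : Fin n, x i * (k i * x (i + 1) - k (i - 1) * x (i - 1)) *
        fderiv ℝ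
          (fun y : Fin n → ℝ => y 0 *
            ∏ j ∈ (Finset.univ.filter (fun j : Fin n => (j : ℕ) % 2 = 0)).erase 0,
              (y j) ^ (μ j)) x
          (Pi.single i 1) = 0 := by
  classical
  have h2n : 2 ∣ n := heven.two_dvd
  have hnmod : n % 2 = 0 := by
    obtain ⟨c, hc⟩ := h2n; omega
  -- restated μ formula over ℕ indices
  have hμ' : ∀ m : ℕ, 2 ≤ m → m % 2 = 0 → m < n →
      μ ((m : ℕ) : Fin n) = ∏ t ∈ Finset.range ((n - m) / 2),
        k ((m + 1 + 2 * t : ℕ) : Fin n) / k ((m + 2 * t : ℕ) : Fin n) := by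
    intro m h2 hpar hlt
    have hv : (((m : ℕ) : Fin n) : ℕ) = m := Fin.val_cast_of_lt hlt
    rw [hμ _ (by rw [hv]; exact h2) (by rw [hv]; exact hpar)]
    simp only [hv]
  -- the step recurrence
  have hstep : ∀ m : ℕ, 2 ≤ m → m % 2 = 0 → m + 2 < n →
      μ ((m : ℕ) : Fin n) * k ((m : ℕ) : Fin n)
        = μ ((m + 2 : ℕ) : Fin n) * k ((m + 1 : ℕ) : Fin n) := by
    intro m h2 hpar hlt
    rw [hμ' m h2 hpar (by omega), hμ' (m + 2) (by omega) (by omega) hlt]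
    have hsum : (n - m) / 2 = (n - (m + 2)) / 2 + 1 := by omega
    rw [hsum, Finset.prod_range_succ']
    have hre : (∏ t ∈ Finset.range ((n - (m + 2)) / 2),
          k ((m + 1 + 2 * (t + 1) : ℕ) : Fin n) / k ((m + 2 * (t + 1) : ℕ) : Fin n))
        = ∏ t ∈ Finset.range ((n - (m + 2)) / 2),
          k ((m + 2 + 1 + 2 * t : ℕ) : Fin n) / k ((m + 2 + 2 * t : ℕ) : Fin n) := by
      refine Finset.prod_congr rfl fun t _ => ?_
      have e1 : m + 1 + 2 * (t + 1) = m + 2 + 1 + 2 * t := by ring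
      have e2 : m + 2 * (t + 1) = m + 2 + 2 * t := by ring
      rw [e1, e2]
    rw [hre]
    have e3 : m + 1 + 2 * 0 = m + 1 := by ring
    have e4 : m + 2 * 0 = m := by ring
    rw [e3, e4, mul_assoc, div_mul_cancel₀ _ (hk _)]
  -- last index
  have hlast : μ ((n - 2 : ℕ) : Fin n) * k ((n - 2 : ℕ) : Fin n) = k ((n - 1 : ℕ) : Fin n) := by
    rw [hμ' (n - 2) (by omega) (by omega) (by omega)]
    have h1 : (n - (n - 2)) / 2 = 1 := by omega
    rw [h1, Finset.prod_range_one]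
    have e1 : n - 2 + 1 + 2 * 0 = n - 1 := by omega
    have e2 : n - 2 + 2 * 0 = n - 2 := by omega
    rw [e1, e2, div_mul_cancel₀ _ (hk _)]
  -- first index
  have hfirst : k ((0 : ℕ) : Fin n) = μ ((2 : ℕ) : Fin n) * k ((1 : ℕ) : Fin n) := by
    rw [hμ' 2 le_rfl rfl (by omega), Finset.prod_div_distrib]
    have hs : n / 2 = (n - 2) / 2 + 1 := by omega
    rw [hs, Finset.prod_range_succ', Finset.prod_range_succ'] at hprod
    have h1 : ∀ t : ℕ, 2 * (t + 1) = 2 + 2 * t := fun t => by ring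
    have h2 : ∀ t : ℕ, 2 + 2 * t + 1 = 2 + 1 + 2 * t := fun t => by ring
    simp only [h1] at hprod
    simp only [h2, Nat.mul_zero, Nat.zero_add] at hprod
    have hB : (∏ t ∈ Finset.range ((n - 2) / 2), k ((2 + 2 * t : ℕ) : Fin n)) ≠ 0 :=
      Finset.prod_ne_zero_iff.mpr fun t _ => hk _
    rw [div_mul_eq_mul_div, eq_div_iff hB]
    linear_combination hprod
  -- the coefficient function
  set ν : Fin n → ℝ := fun j => if (j : ℕ) % 2 = 0 then (if j = 0 then 1 else μ j) else 0
    with hν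
  have hpar : ∀ a : ℕ, ((((a : ℕ) : Fin n)) : ℕ) % 2 = a % 2 := fun a => by
    rw [Fin.val_natCast, Nat.mod_mod_of_dvd _ h2n]
  have hvν : ∀ a : ℕ, a % 2 = 0 → ¬ n ∣ a → ν ((a : ℕ) : Fin n) = μ ((a : ℕ) : Fin n) := by
    intro a hpa hnd
    simp only [hν]
    rw [if_pos (by rw [hpar]; exact hpa), if_neg (by rw [Fin.natCast_eq_zero]; exact hnd)]
  have hvν1 : ∀ a : ℕ, a % 2 = 0 → n ∣ a → ν ((a : ℕ) : Fin n) = 1 := by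
    intro a hpa hnd
    simp only [hν]
    rw [if_pos (by rw [hpar]; exact hpa), if_pos (Fin.natCast_eq_zero.mpr hnd)]
  have hvνodd : ∀ a : ℕ, a % 2 = 1 → ν ((a : ℕ) : Fin n) = 0 := by
    intro a hpa
    simp only [hν]
    rw [if_neg (by rw [hpar]; omega)]
  -- the key recurrence at ℕ level
  have keyN : ∀ m : ℕ, m < n →
      ν ((m : ℕ) : Fin n) * k ((m : ℕ) : Fin n)
        = ν ((m + 2 : ℕ) : Fin n) * k ((m + 1 : ℕ) : Fin n) := by
    intro m hmlt
    by_cases hpm : m % 2 = 0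
    · by_cases h0 : m = 0
      · subst h0
        rw [hvν1 0 rfl (dvd_zero n), hvν (0 + 2) rfl (fun h => by
          have := Nat.le_of_dvd (by norm_num) h; omega), one_mul]
        exact hfirst
      · by_cases hend : m + 2 = n
        · have hm' : m = n - 2 := by omega
          rw [hvν m hpm (fun h => by have := Nat.le_of_dvd (by omega) h; omega),
            hvν1 (m + 2) (by omega) (hend ▸ dvd_refl n), one_mul, hm',
            show n - 2 + 1 = n - 1 by omega]
          exact hlast
        · have hlt2 : m + 2 < n := by omega
          rw [hvν m hpm (fun h => by have := Nat.le_of_dvd (by omega) h; omega),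
            hvν (m + 2) (by omega) (fun h => by have := Nat.le_of_dvd (by omega) h; omega)]
          exact hstep m (by omega) hpm hlt2
    · rw [hvνodd m (by omega), hvνodd (m + 2) (by omega)]
      ring
  -- recurrence over Fin n
  have keyrec : ∀ i : Fin n, ν i * k i = ν (i + 2) * k (i + 1) := by
    intro i
    have c1 : ((((i : ℕ) + 1 : ℕ)) : Fin n) = i + 1 := by push_cast [Fin.cast_val_eq_self]; ring
    have c2 : ((((i : ℕ) + 2 : ℕ)) : Fin n) = i + 2 := by push_cast [Fin.cast_val_eq_self]; ring
    have := keyN (i : ℕ) i.isLt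
    rwa [Fin.cast_val_eq_self, c1, c2] at this
  
  -- Setup derivative
  set T := (Finset.univ.filter (fun j : Fin n => (j : ℕ) % 2 = 0)).erase 0 with hT
  have hg : ∀ j : Fin n, HasFDerivAt (fun y : Fin n → ℝ => y j ^ μ j)
      ((μ j * x j ^ (μ j - 1)) • (ContinuousLinearMap.proj j : (Fin n → ℝ) →L[ℝ] ℝ)) x := by
    intro j
    have h1 : HasFDerivAt (fun y : Fin n → ℝ => y j)
        (ContinuousLinearMap.proj j : (Fin n → ℝ) →L[ℝ] ℝ) x := hasFDerivAt_apply j x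
    have h2 : HasDerivAt (fun s : ℝ => s ^ μ j) (μ j * x j ^ (μ j - 1)) (x j) :=
      Real.hasDerivAt_rpow_const (Or.inl (hx j).ne')
    exact h2.comp_hasFDerivAt x h1
  have h0d : HasFDerivAt (fun y : Fin n → ℝ => y 0)
      (ContinuousLinearMap.proj 0 : (Fin n → ℝ) →L[ℝ] ℝ) x := hasFDerivAt_apply 0 x
  have hp := HasFDerivAt.finset_prod (u := T) (fun j _ => hg j)
  have hH := h0d.mul' hp
  have hfd := hH.fderiv
  rw [show ((fun y : Fin n → ℝ => y 0) * fun y : Fin n → ℝ => ∏ j ∈ T, (y j) ^ (μ j))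
      = (fun y : Fin n → ℝ => y 0 * ∏ j ∈ T, (y j) ^ (μ j)) from rfl] at hfd
  have hop : MulOpposite.op (∏ j ∈ T, x j ^ μ j) • (ContinuousLinearMap.proj 0 : (Fin n → ℝ) →L[ℝ] ℝ)
      = (ContinuousLinearMap.proj 0 : (Fin n → ℝ) →L[ℝ] ℝ).smulRight (∏ j ∈ T, x j ^ μ j) := by
    ext; simp [mul_comm]
  rw [hop] at hfd
  simp only [hfd]
  -- evaluate the derivative on basis vectors
  have happ : ∀ i : Fin n,
      ((x 0 • ∑ j ∈ T, (∏ l ∈ T.erase j, x l ^ μ l) •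
            ((μ j * x j ^ (μ j - 1)) • (ContinuousLinearMap.proj j : (Fin n → ℝ) →L[ℝ] ℝ)))
          + (ContinuousLinearMap.proj 0 : (Fin n → ℝ) →L[ℝ] ℝ).smulRight (∏ j ∈ T, x j ^ μ j))
        (Pi.single i 1)
      = (if i = 0 then ∏ j ∈ T, x j ^ μ j else 0)
        + x 0 * (if i ∈ T then (∏ l ∈ T.erase i, x l ^ μ l) * (μ i * x i ^ (μ i - 1)) else 0) := by
    intro i
    simp only [ContinuousLinearMap.add_apply, ContinuousLinearMap.smul_apply,
      ContinuousLinearMap.smulRight_apply, ContinuousLinearMap.coe_sum', Finset.sum_apply,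
      ContinuousLinearMap.proj_apply, smul_eq_mul, Pi.single_apply]
    rw [Finset.sum_congr rfl (fun j _ => by rw [mul_ite, mul_ite, mul_one, mul_zero, mul_zero])]
    rw [Finset.sum_ite_eq' T i (fun j => (∏ l ∈ T.erase j, x l ^ μ l) * (μ j * x j ^ (μ j - 1)))]
    by_cases h : i = 0 <;> simp [h, eq_comm, add_comm]
  calc ∑ i : Fin n, x i * (k i * x (i + 1) - k (i - 1) * x (i - 1)) *
        ((x 0 • ∑ j ∈ T, (∏ l ∈ T.erase j, x l ^ μ l) •
            ((μ j * x j ^ (μ j - 1)) • (ContinuousLinearMap.proj j : (Fin n → ℝ) →L[ℝ] ℝ)))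
          + (ContinuousLinearMap.proj 0 : (Fin n → ℝ) →L[ℝ] ℝ).smulRight (∏ j ∈ T, x j ^ μ j))
        (Pi.single i 1)
      = ∑ i : Fin n, (x 0 * ∏ j ∈ T, x j ^ μ j) *
          (ν i * (k i * x (i + 1) - k (i - 1) * x (i - 1))) := by
        refine Finset.sum_congr rfl fun i _ => ?_
        rw [happ i]
        by_cases h0 : i = 0
        · subst h0
          rw [if_pos rfl, if_neg (Finset.notMem_erase 0 _)]
          have hν0 : ν 0 = 1 := by simp [hν]
          rw [hν0]
          ring
        · by_cases hpe : (i : ℕ) % 2 = 0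
          · have hiT : i ∈ T := by
              rw [hT]
              exact Finset.mem_erase.mpr ⟨h0, Finset.mem_filter.mpr ⟨Finset.mem_univ _, hpe⟩⟩
            have hνi : ν i = μ i := by
              simp only [hν]
              rw [if_pos hpe, if_neg h0]
            rw [if_neg h0, if_pos hiT, hνi]
            have key2 : x i * ((∏ l ∈ T.erase i, x l ^ μ l) * (μ i * x i ^ (μ i - 1)))
                = μ i * ∏ l ∈ T, x l ^ μ l := by
              rw [← Finset.prod_erase_mul T _ hiT, Real.rpow_sub (hx i), Real.rpow_one]
              field_simp [(hx i).ne']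
            linear_combination (x 0 * (k i * x (i + 1) - k (i - 1) * x (i - 1))) * key2
          · have hiT : i ∉ T := by
              rw [hT]
              intro hmem
              exact hpe (Finset.mem_filter.mp (Finset.mem_of_mem_erase hmem)).2
            have hνi : ν i = 0 := by
              simp only [hν]
              rw [if_neg hpe]
            rw [if_neg h0, if_neg hiT, hνi]
            ring
    _ = (x 0 * ∏ j ∈ T, x j ^ μ j) *
          ∑ i : Fin n, ν i * (k i * x (i + 1) - k (i - 1) * x (i - 1)) := by
        rw [Finset.mul_sum]
    _ = 0 := by
        have final : ∑ i : Fin n, ν i * (k i * x (i + 1) - k (i - 1) * x (i - 1)) = 0 := by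
          have hsplit : ∀ i : Fin n, ν i * (k i * x (i + 1) - k (i - 1) * x (i - 1))
              = ν i * (k i * x (i + 1)) - ν i * (k (i - 1) * x (i - 1)) := fun i => by ring
          simp only [hsplit]
          rw [Finset.sum_sub_distrib]
          have hre : ∑ i : Fin n, ν i * (k (i - 1) * x (i - 1))
              = ∑ i : Fin n, ν (i + 2) * (k (i + 1) * x (i + 1)) := by
            refine (Fintype.sum_equiv (Equiv.addRight (2 : Fin n))
              (fun j => ν (j + 2) * (k (j + 1) * x (j + 1)))
              (fun i => ν i * (k (i - 1) * x (i - 1))) fun j => ?_).symm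
            simp only [Equiv.coe_addRight]
            have h21 : j + 2 - 1 = j + 1 := by
              rw [show (2 : Fin n) = 1 + 1 from one_add_one_eq_two.symm, ← add_assoc, add_sub_cancel_right]
            rw [h21]
          rw [hre, ← Finset.sum_sub_distrib]
          refine Finset.sum_eq_zero fun i _ => ?_
          linear_combination x (i + 1) * keyrec i
        rw [final, mul_zero]
end

section
/- Let n ≥ 4 be even and suppose k_1 k_3 ⋯ k_{n-1} = k_2 k_4 ⋯ k_n with all k_i nonzero. Define μ_j = (k_2 k_4 ⋯ k_{j-2})/(k_3 k_5 ⋯ k_{j-1}) for even j ≥ 4. Then H_3(x) = x_2 x_4^{μ_4} ⋯ x_n^{μ_n} is a first integral of the system ẋ_i = x_i(k_i x_{i+1} - k_{i-1} x_{i-1}) on the open positive orthant. -/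
open Fin.NatCast

/-- For even `n ≥ 4` with `k₁k₃⋯k_{n-1} = k₂k₄⋯k_n`, the function
`H₃ = x₂ x₄^{μ₄} ⋯ x_n^{μ_n}` (even 1-based indices, i.e. odd 0-based indices)
is a first integral on the open positive orthant, where
`μ_j = k₂k₄⋯k_{j-2}/(k₃k₅⋯k_{j-1})` for even `j ≥ 4`. -/
theorem lv_even_H3_first_integral (n : ℕ) [NeZero n] (hn : 4 ≤ n) (heven : Even n)
    (k : Fin n → ℝ) (hk : ∀ i, k i ≠ 0)
    (hprod : ∏ t ∈ Finset.range (n / 2), k ((2 * t : ℕ) : Fin n)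
           = ∏ t ∈ Finset.range (n / 2), k ((2 * t + 1 : ℕ) : Fin n))
    (μ : Fin n → ℝ)
    (hμ : ∀ i : Fin n, 3 ≤ (i : ℕ) → (i : ℕ) % 2 = 1 →
      μ i = ∏ t ∈ Finset.range (((i : ℕ) - 1) / 2),
        k ((2 * t + 1 : ℕ) : Fin n) / k ((2 * t + 2 : ℕ) : Fin n))
    (x : Fin n → ℝ) (hx : ∀ i, 0 < x i) :
    ∑ i : Fin n, x i * (k i * x (i + 1) - k (i - 1) * x (i - 1)) *
        fderiv ℝ
          (fun y : Fin n → ℝ => y 1 *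
            ∏ j ∈ (Finset.univ.filter (fun j : Fin n => (j : ℕ) % 2 = 1)).erase 1,
              (y j) ^ (μ j)) x
          (Pi.single i 1) = 0 := by
  obtain ⟨m, hm⟩ := heven
  have hm2 : n = 2 * m := by omega
  have hm' : n / 2 = m := by omega
  set S : Finset (Fin n) := Finset.univ.filter (fun j : Fin n => (j : ℕ) % 2 = 1) with hS
  set ν : Fin n → ℝ := fun j => if j = (1 : Fin n) then (1 : ℝ) else μ j with hν
  have hval : ∀ a : ℕ, a < n → ((a : Fin n) : ℕ) = a := fun a ha => Fin.val_cast_of_lt ha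
  have hval1 : ((1 : Fin n) : ℕ) = 1 := by
    have := hval 1 (by omega); simpa using this
  have h1mem : (1 : Fin n) ∈ S := by
    refine Finset.mem_filter.mpr ⟨Finset.mem_univ _, ?_⟩
    rw [hval1]
  -- rewrite the function as a pure product of rpow's
  have hH : (fun y : Fin n → ℝ => y 1 * ∏ j ∈ S.erase 1, (y j) ^ (μ j))
      = fun y : Fin n → ℝ => ∏ j ∈ S, (y j) ^ (ν j) := by
    funext y
    rw [← Finset.mul_prod_erase S (fun j => y j ^ ν j) h1mem]
    congr 1
    · simp [hν]
    · exact Finset.prod_congr rfl fun j hj => by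
        rw [hν]; simp [Finset.ne_of_mem_erase hj]
  rw [hH]
  -- compute the derivative
  have hder : HasFDerivAt (fun y : Fin n → ℝ => ∏ j ∈ S, (y j) ^ (ν j))
      (∑ j ∈ S, (∏ l ∈ S.erase j, x l ^ ν l) •
        ((ν j * x j ^ (ν j - 1)) • (ContinuousLinearMap.proj j : (Fin n → ℝ) →L[ℝ] ℝ))) x := by
    apply HasFDerivAt.finset_prod
    intro j _
    have h1 : HasDerivAt (fun s : ℝ => s ^ (ν j)) (ν j * (x j) ^ (ν j - 1)) (x j) :=
      Real.hasDerivAt_rpow_const (Or.inl (hx j).ne')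
    exact h1.comp_hasFDerivAt x (hasFDerivAt_apply j x :
      HasFDerivAt (fun y : Fin n → ℝ => y j) (ContinuousLinearMap.proj j : (Fin n → ℝ) →L[ℝ] ℝ) x)
  rw [hder.fderiv]
  -- evaluate the derivative at the basis vectors
  have happ : ∀ i : Fin n,
      (∑ j ∈ S, (∏ l ∈ S.erase j, x l ^ ν l) •
        ((ν j * x j ^ (ν j - 1)) • (ContinuousLinearMap.proj j : (Fin n → ℝ) →L[ℝ] ℝ)))
        (Pi.single i 1)
      = if i ∈ S then (∏ l ∈ S.erase i, x l ^ ν l) * (ν i * x i ^ (ν i - 1)) else 0 := by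
    intro i
    rw [ContinuousLinearMap.sum_apply]
    have hterm : ∀ j ∈ S,
        ((∏ l ∈ S.erase j, x l ^ ν l) •
          ((ν j * x j ^ (ν j - 1)) • (ContinuousLinearMap.proj j : (Fin n → ℝ) →L[ℝ] ℝ)))
          (Pi.single i 1)
        = if j = i then (∏ l ∈ S.erase j, x l ^ ν l) * (ν j * x j ^ (ν j - 1)) else 0 := by
      intro j _
      simp [Pi.single_apply, mul_ite]
    rw [Finset.sum_congr rfl hterm, Finset.sum_ite_eq' S i
      (fun j => (∏ l ∈ S.erase j, x l ^ ν l) * (ν j * x j ^ (ν j - 1)))]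
  simp only [happ]
  -- restrict the sum to S and simplify each term
  have hstep : ∀ i ∈ S,
      x i * (k i * x (i + 1) - k (i - 1) * x (i - 1)) *
        ((∏ l ∈ S.erase i, x l ^ ν l) * (ν i * x i ^ (ν i - 1)))
      = (∏ j ∈ S, x j ^ ν j) * (ν i * (k i * x (i + 1) - k (i - 1) * x (i - 1))) := by
    intro i hi
    have hxi : x i ≠ 0 := (hx i).ne'
    rw [show ν i - 1 = ν i - (1:ℝ) from rfl, Real.rpow_sub (hx i), Real.rpow_one,
      ← Finset.mul_prod_erase S (fun j => x j ^ ν j) hi]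
    field_simp
  rw [Finset.sum_congr rfl (fun i (_ : i ∈ Finset.univ) => by
    rw [mul_ite, mul_zero]), Finset.sum_ite_mem, Finset.univ_inter,
    Finset.sum_congr rfl hstep, ← Finset.mul_sum]
  -- it remains to show the inner sum vanishes
  suffices hz : ∑ i ∈ S, ν i * (k i * x (i + 1) - k (i - 1) * x (i - 1)) = 0 by
    rw [hz, mul_zero]
  -- reindex over t ∈ range m, i = 2t+1
  have hmem2 : ∀ t, t < m → ((2 * t + 1 : ℕ) : Fin n) ∈ S := by
    intro t ht
    have := hval (2 * t + 1) (by omega)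
    refine Finset.mem_filter.mpr ⟨Finset.mem_univ _, ?_⟩
    rw [this]; omega
  have hreindex : ∑ i ∈ S, ν i * (k i * x (i + 1) - k (i - 1) * x (i - 1))
      = ∑ t ∈ Finset.range m, ν ((2 * t + 1 : ℕ) : Fin n) *
          (k ((2 * t + 1 : ℕ) : Fin n) * x ((2 * t + 2 : ℕ) : Fin n)
            - k ((2 * t : ℕ) : Fin n) * x ((2 * t : ℕ) : Fin n)) := by
    refine Finset.sum_nbij' (fun i => ((i : ℕ) - 1) / 2) (fun t => ((2 * t + 1 : ℕ) : Fin n))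
      ?_ ?_ ?_ ?_ ?_
    · intro i hi
      have h1 : (i : ℕ) % 2 = 1 := by simpa [hS] using hi
      have h2 : (i : ℕ) < n := i.isLt
      simp only [Finset.mem_range]
      omega
    · intro t ht
      exact hmem2 t (Finset.mem_range.mp ht)
    · intro i hi
      have h1 : (i : ℕ) % 2 = 1 := by simpa [hS] using hi
      have h2 : 2 * (((i : ℕ) - 1) / 2) + 1 = (i : ℕ) := by omega
      show ((2 * (((i : ℕ) - 1) / 2) + 1 : ℕ) : Fin n) = i
      rw [h2, Fin.cast_val_eq_self]
    · intro t ht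
      have := hval (2 * t + 1) (by have := Finset.mem_range.mp ht; omega)
      show ((((2 * t + 1 : ℕ) : Fin n) : ℕ) - 1) / 2 = t
      rw [this]; omega
    · intro i hi
      have h1 : (i : ℕ) % 2 = 1 := by simpa [hS] using hi
      have h2 : 2 * (((i : ℕ) - 1) / 2) + 1 = (i : ℕ) := by omega
      set q : ℕ := ((i : ℕ) - 1) / 2 with hq
      have e1 : ((2 * q + 1 : ℕ) : Fin n) = i := by rw [h2, Fin.cast_val_eq_self]
      have e2 : ((2 * q + 2 : ℕ) : Fin n) = i + 1 := by
        rw [show (2 * q + 2 : ℕ) = (2 * q + 1) + 1 from rfl, Nat.cast_add, Nat.cast_one, e1]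
      have e3 : ((2 * q : ℕ) : Fin n) = i - 1 := by
        rw [← e1, show (2 * q + 1 : ℕ) = (2 * q) + 1 from rfl, Nat.cast_add, Nat.cast_one,
          add_sub_cancel_right]
      show ν i * (k i * x (i + 1) - k (i - 1) * x (i - 1))
        = ν ((2 * q + 1 : ℕ) : Fin n) * (k ((2 * q + 1 : ℕ) : Fin n) * x ((2 * q + 2 : ℕ) : Fin n)
            - k ((2 * q : ℕ) : Fin n) * x ((2 * q : ℕ) : Fin n))
      rw [e1, e2, e3]
  rw [hreindex]
  -- the coefficients
  set c : ℕ → ℝ := fun t => ∏ s ∈ Finset.range t,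
    k ((2 * s + 1 : ℕ) : Fin n) / k ((2 * s + 2 : ℕ) : Fin n) with hc
  have hνc : ∀ t, t < m → ν ((2 * t + 1 : ℕ) : Fin n) = c t := by
    intro t ht
    rcases Nat.eq_zero_or_pos t with rfl | htpos
    · have : ((2 * 0 + 1 : ℕ) : Fin n) = 1 := by norm_num
      rw [this, hν, hc]
      simp
    · have hvi : (((2 * t + 1 : ℕ) : Fin n) : ℕ) = 2 * t + 1 := hval _ (by omega)
      have hne : ((2 * t + 1 : ℕ) : Fin n) ≠ 1 := by
        intro h; rw [h, hval1] at hvi; omega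
      rw [hν]
      simp only [if_neg hne]
      rw [hμ _ (by omega) (by omega), hvi]
      rw [show (2 * t + 1 - 1) / 2 = t by omega]
  -- telescoping
  set f : ℕ → ℝ := fun t => c t * (k ((2 * t : ℕ) : Fin n) * x ((2 * t : ℕ) : Fin n)) with hf
  have hkey : ∀ t, c t * k ((2 * t + 1 : ℕ) : Fin n) = c (t + 1) * k ((2 * t + 2 : ℕ) : Fin n) := by
    intro t
    rw [hc]
    simp only [Finset.prod_range_succ]
    rw [mul_assoc, div_mul_cancel₀ _ (hk _)]
  have hterm : ∀ t, t < m →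
      ν ((2 * t + 1 : ℕ) : Fin n) *
        (k ((2 * t + 1 : ℕ) : Fin n) * x ((2 * t + 2 : ℕ) : Fin n)
          - k ((2 * t : ℕ) : Fin n) * x ((2 * t : ℕ) : Fin n)) = f (t + 1) - f t := by
    intro t ht
    rw [hνc t ht, hf]
    simp only
    rw [show 2 * (t + 1) = 2 * t + 2 by ring]
    rw [mul_sub, ← mul_assoc, hkey t]
    ring
  rw [Finset.sum_congr rfl (fun t ht => hterm t (Finset.mem_range.mp ht)),
    Finset.sum_range_sub f]
  -- boundary terms
  have hcm : c m = 1 := by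
    show (∏ s ∈ Finset.range m, k ((2 * s + 1 : ℕ) : Fin n) / k ((2 * s + 2 : ℕ) : Fin n)) = 1
    rw [Finset.prod_div_distrib]
    have hshift : ∏ s ∈ Finset.range m, k ((2 * s + 2 : ℕ) : Fin n)
        = ∏ s ∈ Finset.range m, k ((2 * s : ℕ) : Fin n) := by
      set g : ℕ → ℝ := fun s => k ((2 * s : ℕ) : Fin n) with hg
      have e0 : ∀ s : ℕ, k ((2 * s + 2 : ℕ) : Fin n) = g (s + 1) := by
        intro s; rw [hg]; simp only
        rw [show 2 * (s + 1) = 2 * s + 2 by ring]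
      have e1 := Finset.prod_range_succ' g m
      have e2 := Finset.prod_range_succ g m
      have hgm : g m = g 0 := by
        rw [hg]; simp only
        rw [← hm2, Fin.natCast_self]
        norm_num
      have hg0 : g 0 ≠ 0 := by
        rw [hg]; simp only; exact hk _
      have : (∏ s ∈ Finset.range m, g (s + 1)) * g 0
          = (∏ s ∈ Finset.range m, g s) * g 0 := by
        rw [← e1, e2, hgm]
      have h3 := mul_right_cancel₀ hg0 this
      calc ∏ s ∈ Finset.range m, k ((2 * s + 2 : ℕ) : Fin n)
          = ∏ s ∈ Finset.range m, g (s + 1) := Finset.prod_congr rfl fun s _ => e0 s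
        _ = ∏ s ∈ Finset.range m, g s := h3
    rw [hm'] at hprod
    rw [hshift, ← hprod, div_self]
    exact Finset.prod_ne_zero_iff.mpr fun s _ => hk _
  have hc0 : c 0 = 1 := by rw [hc]; simp
  rw [hf]
  simp only
  rw [hcm, hc0, ← hm2, Fin.natCast_self]
  norm_num
end

section
/- For n = 4 with k_1 k_3 = k_2 k_4 and all k_i nonzero, the functions H_1 = x_1 + x_2 + x_3 + x_4, H_2 = x_1 x_3^{k_4/k_3}, H_3 = x_2 x_4^{k_2/k_3} are all first integrals of the system ẋ_1 = x_1(k_1 x_2 - k_4 x_4), ẋ_2 = x_2(k_2 x_3 - k_1 x_1), ẋ_3 = x_3(k_3 x_4 - k_2 x_2), ẋ_4 = x_4(k_4 x_1 - k_3 x_3), on the open positive orthant of ℝ^4. -/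
/-- For `n = 4` with `k₁k₃ = k₂k₄`, the functions `H₁ = x₁+x₂+x₃+x₄`,
`H₂ = x₁ x₃^(k₄/k₃)` and `H₃ = x₂ x₄^(k₂/k₃)` are first integrals of the
four-dimensional Lotka-Volterra system on the open positive orthant. -/
theorem lv4_first_integrals (k1 k2 k3 k4 : ℝ)
    (h1 : k1 ≠ 0) (h2 : k2 ≠ 0) (h3 : k3 ≠ 0) (h4 : k4 ≠ 0)
    (hk : k1 * k3 = k2 * k4)
    (x1 x2 x3 x4 : ℝ) (hx1 : 0 < x1) (hx2 : 0 < x2) (hx3 : 0 < x3) (hx4 : 0 < x4) :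
    (x1 * (k1 * x2 - k4 * x4) * deriv (fun t => t + x2 + x3 + x4) x1
      + x2 * (k2 * x3 - k1 * x1) * deriv (fun t => x1 + t + x3 + x4) x2
      + x3 * (k3 * x4 - k2 * x2) * deriv (fun t => x1 + x2 + t + x4) x3
      + x4 * (k4 * x1 - k3 * x3) * deriv (fun t => x1 + x2 + x3 + t) x4 = 0) ∧
    (x1 * (k1 * x2 - k4 * x4) * deriv (fun t => t * x3 ^ (k4 / k3)) x1
      + x2 * (k2 * x3 - k1 * x1) * deriv (fun _t : ℝ => x1 * x3 ^ (k4 / k3)) x2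
      + x3 * (k3 * x4 - k2 * x2) * deriv (fun t => x1 * t ^ (k4 / k3)) x3
      + x4 * (k4 * x1 - k3 * x3) * deriv (fun _t : ℝ => x1 * x3 ^ (k4 / k3)) x4 = 0) ∧
    (x1 * (k1 * x2 - k4 * x4) * deriv (fun _t : ℝ => x2 * x4 ^ (k2 / k3)) x1
      + x2 * (k2 * x3 - k1 * x1) * deriv (fun t => t * x4 ^ (k2 / k3)) x2
      + x3 * (k3 * x4 - k2 * x2) * deriv (fun _t : ℝ => x2 * x4 ^ (k2 / k3)) x3
      + x4 * (k4 * x1 - k3 * x3) * deriv (fun t => x2 * t ^ (k2 / k3)) x4 = 0) := by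
  have dconst : ∀ (c x : ℝ), deriv (fun _t : ℝ => c) x = 0 := fun c x => deriv_const x c
  have dmul : ∀ (c x : ℝ), deriv (fun t : ℝ => t * c) x = c := by
    intro c x
    simpa using deriv_mul_const (differentiableAt_id') c (x := x)
  have dpow : ∀ (p x : ℝ), 0 < x → ∀ c : ℝ,
      deriv (fun t : ℝ => c * t ^ p) x = c * (p * x ^ (p - 1)) := by
    intro p x hx c
    rw [deriv_const_mul _ ((Real.hasDerivAt_rpow_const (Or.inl hx.ne')).differentiableAt)]
    rw [(Real.hasDerivAt_rpow_const (p := p) (Or.inl hx.ne')).deriv]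
  have key : ∀ (p x : ℝ), 0 < x → x * (x ^ (p - 1)) = x ^ p := by
    intro p x hx
    nth_rewrite 1 [← Real.rpow_one x]
    rw [← Real.rpow_add hx]
    ring_nf
  have hk' : k1 = k2 * k4 / k3 := by field_simp; linarith [hk]
  have hinv : k3 * k3⁻¹ = 1 := mul_inv_cancel₀ h3
  refine ⟨?_, ?_, ?_⟩
  · have d1 : deriv (fun t => t + x2 + x3 + x4) x1 = 1 :=
      ((((hasDerivAt_id x1).add_const x2).add_const x3).add_const x4).deriv
    have d2 : deriv (fun t => x1 + t + x3 + x4) x2 = 1 :=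
      ((((hasDerivAt_id x2).const_add x1).add_const x3).add_const x4).deriv
    have d3 : deriv (fun t => x1 + x2 + t + x4) x3 = 1 := by
      have : HasDerivAt (fun t : ℝ => x1 + x2 + t + x4) 1 x3 :=
        (((hasDerivAt_id x3).const_add (x1 + x2)).add_const x4)
      simpa using this.deriv
    have d4 : deriv (fun t => x1 + x2 + x3 + t) x4 = 1 := by
      have : HasDerivAt (fun t : ℝ => x1 + x2 + x3 + t) 1 x4 :=
        ((hasDerivAt_id x4).const_add (x1 + x2 + x3))
      simpa using this.deriv
    rw [d1, d2, d3, d4]; ring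
  · rw [dmul, dconst, dconst, dpow _ _ hx3]
    have e := key (k4 / k3) x3 hx3
    rw [hk']
    linear_combination (x1 * (k4 / k3) * (k3 * x4 - k2 * x2)) * e + (x1 * k4 * x4 * x3 ^ (k4 / k3)) * hinv
  · rw [dmul, dconst, dconst, dpow _ _ hx4]
    have e := key (k2 / k3) x4 hx4
    rw [hk']
    linear_combination (x2 * (k2 / k3) * (k4 * x1 - k3 * x3)) * e - (k2 * x2 * x3 * x4 ^ (k2 / k3)) * hinv
end

section
/- Suppose λ_1,…,λ_n are real numbers (indices cyclic mod n) satisfying the recurrence k_{j-1} λ_{j-1} = k_j λ_{j+1} for all j. Then the function H(x) = Π_{i=1}^n x_i^{λ_i} is a first integral of the Lotka-Volterra system ẋ_i = x_i(k_i x_{i+1} - k_{i-1} x_{i-1}) on the open positive orthant. -/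
/-- If the reals `λᵢ` (indices cyclic mod `n`) satisfy `k_{j-1} λ_{j-1} = k_j λ_{j+1}`
for all `j`, then `H x = ∏ i, (x i) ^ (λ i)` is a first integral of the
Lotka-Volterra system on the open positive orthant. -/
theorem lv_lambda_first_integral (n : ℕ) [NeZero n] (hn : 2 ≤ n)
    (k : Fin n → ℝ) (hk : ∀ i, k i ≠ 0)
    (lam : Fin n → ℝ)
    (hrec : ∀ j : Fin n, k (j - 1) * lam (j - 1) = k j * lam (j + 1))
    (x : Fin n → ℝ) (hx : ∀ i, 0 < x i) :
    ∑ i : Fin n, x i * (k i * x (i + 1) - k (i - 1) * x (i - 1)) *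
        fderiv ℝ (fun y : Fin n → ℝ => ∏ j : Fin n, (y j) ^ (lam j)) x
          (Pi.single i 1) = 0 := by
  classical
  have hder : ∀ j : Fin n, HasFDerivAt (fun y : Fin n → ℝ => (y j) ^ (lam j))
      ((lam j * x j ^ (lam j - 1)) • (ContinuousLinearMap.proj j :
        (Fin n → ℝ) →L[ℝ] ℝ)) x := fun j => by
    have := (Real.hasDerivAt_rpow_const (p := lam j) (Or.inl (hx j).ne')).comp_hasFDerivAt x
      ((ContinuousLinearMap.proj (R := ℝ) (φ := fun _ : Fin n => ℝ) j).hasFDerivAt (x := x))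
    exact this
  have hfd := (HasFDerivAt.finset_prod (u := Finset.univ) (fun j _ => hder j)).fderiv
  rw [hfd]
  simp only [ContinuousLinearMap.coe_sum', Finset.sum_apply,
    ContinuousLinearMap.coe_smul', Pi.smul_apply, ContinuousLinearMap.proj_apply,
    smul_eq_mul, Pi.single_apply]
  have hsingle : ∀ i : Fin n,
      (∑ j : Fin n, (∏ l ∈ Finset.univ.erase j, x l ^ lam l) *
        (lam j * x j ^ (lam j - 1) * if j = i then (1:ℝ) else 0))
      = (∏ l ∈ Finset.univ.erase i, x l ^ lam l) * (lam i * x i ^ (lam i - 1)) := by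
    intro i
    rw [Finset.sum_eq_single i]
    · simp
    · intro b _ hb; simp [hb]
    · simp
  simp only [hsingle]
  have key : ∀ i : Fin n,
      x i * (k i * x (i + 1) - k (i - 1) * x (i - 1)) *
        ((∏ l ∈ Finset.univ.erase i, x l ^ lam l) * (lam i * x i ^ (lam i - 1)))
      = (∏ l : Fin n, x l ^ lam l) *
          (lam i * (k i * x (i + 1) - k (i - 1) * x (i - 1))) := by
    intro i
    have hx1 : x i * x i ^ (lam i - 1) = x i ^ lam i := by
      have h := Real.rpow_add (hx i) 1 (lam i - 1)
      rw [Real.rpow_one] at h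
      rw [← h]
      congr 1
      ring
    have hp : (∏ l : Fin n, x l ^ lam l)
        = x i ^ lam i * ∏ l ∈ Finset.univ.erase i, x l ^ lam l :=
      (Finset.mul_prod_erase _ _ (Finset.mem_univ i)).symm
    rw [hp, ← hx1]; ring
  simp only [key]
  rw [← Finset.mul_sum]
  have h1 : ∑ i : Fin n, lam i * (k i * x (i + 1))
      = ∑ i : Fin n, lam (i - 1) * (k (i - 1) * x i) :=
    Fintype.sum_equiv (Equiv.addRight (1 : Fin n)) _ _ (fun i => by simp)
  have h2 : ∑ i : Fin n, lam i * (k (i - 1) * x (i - 1))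
      = ∑ i : Fin n, lam (i + 1) * (k i * x i) :=
    Fintype.sum_equiv (Equiv.subRight (1 : Fin n)) _ _ (fun i => by simp)
  have hz : ∑ i : Fin n, lam i * (k i * x (i + 1) - k (i - 1) * x (i - 1)) = 0 := by
    simp only [mul_sub]
    rw [Finset.sum_sub_distrib, h1, h2, ← Finset.sum_sub_distrib]
    apply Finset.sum_eq_zero
    intro i _
    linear_combination x i * hrec i
  rw [hz, mul_zero]
end
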